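/- For every β ∈ k with β ≠ 0 and every α ∈ k, and every n ∈ ℕ, the degree-n component of the down-up algebra D(α,β) (the k-span of the images of all words of length n in u and d) has k-dimension equal to the number of triples (i,j,l) ∈ ℕ³ with i + 2j + l = n; equivalently, the Hilbert series of D(α,β) is 1/((1−t)²(1−t²)). -/

import Mathlib

open FreeAlgebra

noncomputable section

/-- The defining relations of the down-up algebra `D(a,b)` (with `u = ι k 0`, `d = ι k 1`). -/
inductive DownUpRel (k : Type*) [CommRing k] (a b : k) :
    FreeAlgebra k (Fin 2) → FreeAlgebra k (Fin 2) → Prop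
  | rel1 : DownUpRel k a b (ι k 0 * ι k 0 * ι k 1)
      (a • (ι k 0 * ι k 1 * ι k 0) + b • (ι k 1 * ι k 0 * ι k 0))
  | rel2 : DownUpRel k a b (ι k 0 * ι k 1 * ι k 1)
      (a • (ι k 1 * ι k 0 * ι k 1) + b • (ι k 1 * ι k 1 * ι k 0))

/-- The down-up algebra `D(a,b)`. -/
abbrev DownUp (k : Type*) [CommRing k] (a b : k) : Type _ :=
  RingQuot (DownUpRel k a b)

/-- The image in `D(a,b)` of a word in the free monoid on the generators `u, d`. -/
def DownUp.wordVal (k : Type*) [CommRing k] (a b : k) :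
    FreeMonoid (Fin 2) →* DownUp k a b :=
  FreeMonoid.lift fun i => RingQuot.mkAlgHom k (DownUpRel k a b) (ι k i)

/-- The degree-`n` component of the down-up algebra: the `k`-span of the images of
all words of length `n` in `u` and `d`. -/
def DownUp.degComp (k : Type*) [CommRing k] (a b : k) (n : ℕ) :
    Submodule k (DownUp k a b) :=
  Submodule.span k {z | ∃ w : FreeMonoid (Fin 2), w.length = n ∧ DownUp.wordVal k a b w = z}

namespace DUAux

open MvPolynomial

variable {k : Type*} [Field k] (α β : k)

abbrev P (k : Type*) [Field k] : Type _ := MvPolynomial (Fin 2) k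

def σe (hβ : β ≠ 0) : P k ≃ₐ[k] P k :=
  AlgEquiv.ofAlgHom
    (aeval ![C α * X 0 + C β * X 1, X 0])
    (aeval ![X 1, C β⁻¹ * X 0 - C (α * β⁻¹) * X 1])
    (by
      apply MvPolynomial.algHom_ext
      have hb : (C β : P k) * C β⁻¹ = 1 := by rw [← C_mul, mul_inv_cancel₀ hβ, C_1]
      intro i
      fin_cases i <;> simp <;>
        linear_combination (X 1 : P k) * hb)
    (by
      apply MvPolynomial.algHom_ext
      have hb : (C β : P k) * C β⁻¹ = 1 := by rw [← C_mul, mul_inv_cancel₀ hβ, C_1]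
      intro i
      fin_cases i <;> simp <;>
        linear_combination ((X 0 : P k) - C α * X 1) * hb)

variable (hβ : β ≠ 0)

lemma σe_X0 : σe α β hβ (X 0) = C α * X 0 + C β * X 1 := by
  simp [σe, AlgEquiv.ofAlgHom]

lemma σe_X1 : σe α β hβ (X 1) = X 0 := by
  simp [σe, AlgEquiv.ofAlgHom]

lemma σe_symm_X0 : (σe α β hβ).symm (X 0) = X 1 := by
  simp [σe, AlgEquiv.ofAlgHom]

lemma σe_symm_X1 : (σe α β hβ).symm (X 1) = C β⁻¹ * X 0 - C (α * β⁻¹) * X 1 := by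
  simp [σe, AlgEquiv.ofAlgHom]

/-- The linear form `σ^a(y)`. -/
def L (a : ℤ) : P k := ((σe α β hβ) ^ a) (X 1)

lemma zpow_apply_L (a c : ℤ) : ((σe α β hβ) ^ a) (L α β hβ c) = L α β hβ (a + c) := by
  rw [L, L, ← AlgEquiv.mul_apply, ← zpow_add]

lemma L_ne_zero (a : ℤ) : L α β hβ a ≠ 0 := by
  rw [L]
  intro h
  have := ((σe α β hβ) ^ a).injective (h.trans (map_zero _).symm)
  exact MvPolynomial.X_ne_zero 1 this

/-- Evaluation killing `X 0`. -/
def ψa : P k →ₐ[k] Polynomial k := aeval ![0, Polynomial.X]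

/-- The map factoring out the linear form `L b`, sending `L b ↦ 0`, `L (b-1) ↦ z`. -/
def φa (b : ℤ) : P k →ₐ[k] Polynomial k :=
  (ψa (k := k)).comp ((σe α β hβ) ^ (1 - b)).toAlgHom

lemma φa_L (b a : ℤ) : φa α β hβ b (L α β hβ a) = ψa (L α β hβ (1 - b + a)) := by
  simp [φa, zpow_apply_L]

lemma φa_L_self (b : ℤ) : φa α β hβ b (L α β hβ b) = 0 := by
  rw [φa_L]
  have : (1 : ℤ) - b + b = 1 := by ring
  rw [this]
  have h1 : L α β hβ 1 = X 0 := by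
    rw [L, zpow_one, σe_X1]
  rw [h1]
  simp [ψa]

lemma φa_L_pred (b : ℤ) : φa α β hβ b (L α β hβ (b - 1)) = Polynomial.X := by
  rw [φa_L]
  have : (1 : ℤ) - b + (b - 1) = 0 := by ring
  rw [this]
  have h0 : L α β hβ 0 = X 1 := by rw [L, zpow_zero]; rfl
  rw [h0]
  simp [ψa]

/-- The normal-form polynomial. -/
def Q (I Λ j : ℕ) : P k :=
  L α β hβ ((I : ℤ) - j) ^ j * ∏ m ∈ Finset.range (Λ - j), L α β hβ ((I : ℤ) - j - m)

lemma Q_factor (I Λ j : ℕ) (hj : j ≤ Λ) :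
    Q α β hβ I (Λ + 1) j = Q α β hβ I Λ j * L α β hβ ((I : ℤ) - Λ) := by
  rw [Q, Q]
  have h : Λ + 1 - j = (Λ - j) + 1 := by omega
  rw [h, Finset.prod_range_succ]
  have h2 : (I : ℤ) - j - (Λ - j : ℕ) = (I : ℤ) - Λ := by
    have : ((Λ - j : ℕ) : ℤ) = (Λ : ℤ) - j := by omega
    rw [this]; ring
  rw [h2, mul_assoc]

lemma Q_top (I Λ : ℕ) (h : Λ ≤ I) :
    Q α β hβ I Λ Λ = L α β hβ ((I : ℤ) - Λ) ^ Λ := by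
  rw [Q]
  simp

lemma core (Λ : ℕ) : ∀ (I : ℕ) (c : ℕ → k),
    (∑ j ∈ Finset.range (min I Λ + 1), c j • Q α β hβ I Λ j) = 0 →
    ∀ j ≤ min I Λ, c j = 0 := by
  induction Λ with
  | zero =>
    intro I c hsum j hj
    simp only [Nat.min_zero, zero_add, Finset.sum_range_one] at hsum
    have hj0 : j = 0 := by omega
    subst hj0
    have hQ : Q α β hβ I 0 0 = 1 := by simp [Q]
    rw [hQ] at hsum
    rcases smul_eq_zero.mp hsum with h | h
    · exact h
    · exact absurd h one_ne_zero
  | succ Λ ih =>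
    intro I c hsum j hj
    by_cases hIΛ : Λ + 1 ≤ I
    · -- min I (Λ+1) = Λ+1
      have hmin : min I (Λ + 1) = Λ + 1 := by omega
      rw [hmin] at hsum hj
      -- Step A : c (Λ+1) = 0 by applying φa
      have hctop : c (Λ + 1) = 0 := by
        have happ := congrArg (φa α β hβ ((I : ℤ) - Λ)) hsum
        rw [map_sum, map_zero] at happ
        rw [Finset.sum_range_succ] at happ
        have hkill : ∀ m ∈ Finset.range (Λ + 1),
            φa α β hβ ((I : ℤ) - Λ) (c m • Q α β hβ I (Λ + 1) m) = 0 := by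
          intro m hm
          rw [Finset.mem_range] at hm
          have hmΛ : m ≤ Λ := by omega
          rw [Q_factor α β hβ I Λ m hmΛ]
          rw [map_smul, map_mul, φa_L_self, mul_zero, smul_zero]
        rw [Finset.sum_congr rfl hkill, Finset.sum_const_zero, zero_add] at happ
        have hQt : Q α β hβ I (Λ + 1) (Λ + 1) = L α β hβ ((I : ℤ) - (Λ + 1)) ^ (Λ + 1) := by
          rw [Q]; simp
        rw [hQt, map_smul, map_pow] at happ
        have : (I : ℤ) - (Λ + 1) = ((I : ℤ) - Λ) - 1 := by ring
        rw [this, φa_L_pred] at happ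
        have hX : (Polynomial.X : Polynomial k) ^ (Λ + 1) ≠ 0 :=
          pow_ne_zero _ Polynomial.X_ne_zero
        exact (smul_eq_zero.mp happ).resolve_right hX
      -- Step B : strip L b
      rw [Finset.sum_range_succ, hctop, zero_smul, add_zero] at hsum
      have hstrip : ∑ m ∈ Finset.range (Λ + 1), c m • Q α β hβ I Λ m = 0 := by
        have : ∑ m ∈ Finset.range (Λ + 1), c m • Q α β hβ I (Λ + 1) m
            = (∑ m ∈ Finset.range (Λ + 1), c m • Q α β hβ I Λ m) * L α β hβ ((I : ℤ) - Λ) := by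
          rw [Finset.sum_mul]
          apply Finset.sum_congr rfl
          intro m hm
          rw [Finset.mem_range] at hm
          rw [Q_factor α β hβ I Λ m (by omega), smul_mul_assoc]
        rw [this] at hsum
        rcases mul_eq_zero.mp hsum with h | h
        · exact h
        · exact absurd h (L_ne_zero α β hβ _)
      have hmin2 : min I Λ = Λ := by omega
      rcases Nat.lt_or_ge j (Λ + 1) with h | h
      · exact ih I c (by rw [hmin2]; exact hstrip) j (by omega)
      · have : j = Λ + 1 := by omega
        rw [this]; exact hctop
    · -- I ≤ Λ
      have hmin : min I (Λ + 1) = I := by omega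
      have hmin2 : min I Λ = I := by omega
      rw [hmin] at hsum hj
      have hstrip : ∑ m ∈ Finset.range (I + 1), c m • Q α β hβ I Λ m = 0 := by
        have : ∑ m ∈ Finset.range (I + 1), c m • Q α β hβ I (Λ + 1) m
            = (∑ m ∈ Finset.range (I + 1), c m • Q α β hβ I Λ m) * L α β hβ ((I : ℤ) - Λ) := by
          rw [Finset.sum_mul]
          apply Finset.sum_congr rfl
          intro m hm
          rw [Finset.mem_range] at hm
          rw [Q_factor α β hβ I Λ m (by omega), smul_mul_assoc]
        rw [this] at hsum
        rcases mul_eq_zero.mp hsum with h | h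
        · exact h
        · exact absurd h (L_ne_zero α β hβ _)
      exact ih I c (by rw [hmin2]; exact hstrip) j (by omega)


/-- The module `k[x,y][t,t⁻¹]` on which `D(α,β)` acts. -/
abbrev M (k : Type*) [Field k] : Type _ := ℤ →₀ P k

def Uop : M k →ₗ[k] M k :=
  Finsupp.lsum k fun n => (Finsupp.lsingle (n + 1)).comp (σe α β hβ).toLinearMap

def Dop : M k →ₗ[k] M k :=
  Finsupp.lsum k fun n => (Finsupp.lsingle (n - 1)).comp
    ((LinearMap.mulLeft k (X 1 : P k)).comp (σe α β hβ).symm.toLinearMap)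

@[simp] lemma Uop_single (n : ℤ) (f : P k) :
    Uop α β hβ (Finsupp.single n f) = Finsupp.single (n + 1) (σe α β hβ f) := by
  rw [Uop, Finsupp.lsum_single]; rfl

@[simp] lemma Dop_single (n : ℤ) (f : P k) :
    Dop α β hβ (Finsupp.single n f) = Finsupp.single (n - 1) (X 1 * (σe α β hβ).symm f) := by
  rw [Dop, Finsupp.lsum_single]; rfl

lemma rel1E : Uop α β hβ * Uop α β hβ * Dop α β hβ
    = α • (Uop α β hβ * Dop α β hβ * Uop α β hβ)
      + β • (Dop α β hβ * Uop α β hβ * Uop α β hβ) := by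
  apply Finsupp.lhom_ext
  intro n f
  simp only [Module.End.mul_apply, LinearMap.add_apply, LinearMap.smul_apply,
    Uop_single, Dop_single, map_mul, AlgEquiv.apply_symm_apply, AlgEquiv.symm_apply_apply,
    Finsupp.smul_single, σe_X1, σe_X0, sub_add_cancel, add_sub_cancel_right]
  rw [← Finsupp.single_add]
  congr 1
  rw [smul_eq_C_mul, smul_eq_C_mul]
  ring

lemma rel2E : Uop α β hβ * Dop α β hβ * Dop α β hβ
    = α • (Dop α β hβ * Uop α β hβ * Dop α β hβ)
      + β • (Dop α β hβ * Dop α β hβ * Uop α β hβ) := by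
  apply Finsupp.lhom_ext
  intro n f
  simp only [Module.End.mul_apply, LinearMap.add_apply, LinearMap.smul_apply,
    Uop_single, Dop_single, map_mul, map_sub, AlgEquiv.apply_symm_apply,
    AlgEquiv.symm_apply_apply, Finsupp.smul_single, σe_X1, σe_X0,
    sub_add_cancel, add_sub_cancel_right]
  rw [← Finsupp.single_add]
  congr 1
  rw [smul_eq_C_mul, smul_eq_C_mul]
  have hb : (C β : P k) * C β⁻¹ = 1 := by
    rw [← C_mul, mul_inv_cancel₀ hβ, C_1]
  rw [σe_symm_X0, σe_symm_X1, C_mul]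
  linear_combination (-((X 0 : P k) * X 1 - C α * X 1 * X 1) * ((σe α β hβ).symm f)) * hb


/-! ### The representation -/

def Fhom : FreeAlgebra k (Fin 2) →ₐ[k] Module.End k (M k) :=
  FreeAlgebra.lift k ![Uop α β hβ, Dop α β hβ]

lemma Fhom_ι0 : Fhom α β hβ (ι k 0) = Uop α β hβ := by
  rw [Fhom, FreeAlgebra.lift_ι_apply]; rfl

lemma Fhom_ι1 : Fhom α β hβ (ι k 1) = Dop α β hβ := by
  rw [Fhom, FreeAlgebra.lift_ι_apply]; rfl

def ρ : DownUp k α β →ₐ[k] Module.End k (M k) :=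
  RingQuot.liftAlgHom k ⟨Fhom α β hβ, by
    intro x y h
    cases h with
    | rel1 =>
        simp only [map_mul, map_add, map_smul, Fhom_ι0, Fhom_ι1]
        exact rel1E α β hβ
    | rel2 =>
        simp only [map_mul, map_add, map_smul, Fhom_ι0, Fhom_ι1]
        exact rel2E α β hβ⟩

def Ue : DownUp k α β := RingQuot.mkAlgHom k (DownUpRel k α β) (ι k 0)
def De : DownUp k α β := RingQuot.mkAlgHom k (DownUpRel k α β) (ι k 1)

lemma ρ_Ue : ρ α β hβ (Ue α β) = Uop α β hβ := by
  rw [Ue, ρ, RingQuot.liftAlgHom_mkAlgHom_apply, Fhom_ι0]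

lemma ρ_De : ρ α β hβ (De α β) = Dop α β hβ := by
  rw [De, ρ, RingQuot.liftAlgHom_mkAlgHom_apply, Fhom_ι1]

/-! ### Words as lists -/

def valL (A : List (Fin 2)) : DownUp k α β := DownUp.wordVal k α β (FreeMonoid.ofList A)

lemma valL_nil : valL α β ([] : List (Fin 2)) = 1 := by
  rw [valL, FreeMonoid.ofList_nil, map_one]

lemma valL_cons (x : Fin 2) (A : List (Fin 2)) :
    valL α β (x :: A) = RingQuot.mkAlgHom k (DownUpRel k α β) (ι k x) * valL α β A := by
  rw [valL, FreeMonoid.ofList_cons, map_mul]; rfl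

lemma valL_append (A B : List (Fin 2)) :
    valL α β (A ++ B) = valL α β A * valL α β B := by
  rw [valL, FreeMonoid.ofList_append, map_mul]; rfl

def duRep : ℕ → List (Fin 2)
  | 0 => []
  | j + 1 => 1 :: 0 :: duRep j

def nwL (i j l : ℕ) : List (Fin 2) :=
  List.replicate i 0 ++ (duRep j ++ List.replicate l 1)

lemma length_duRep (j : ℕ) : (duRep j).length = 2 * j := by
  induction j with
  | zero => rfl
  | succ j ih => simp [duRep, ih]; omega

lemma length_nwL (i j l : ℕ) : (nwL i j l).length = i + 2 * j + l := by
  simp [nwL, length_duRep]; omega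

lemma valL_replicate0 (i : ℕ) :
    valL α β (List.replicate i (0 : Fin 2)) = (Ue α β) ^ i := by
  induction i with
  | zero => simpa using valL_nil α β
  | succ i ih => rw [List.replicate_succ, valL_cons, ih, pow_succ']; rfl

lemma valL_replicate1 (l : ℕ) :
    valL α β (List.replicate l (1 : Fin 2)) = (De α β) ^ l := by
  induction l with
  | zero => simpa using valL_nil α β
  | succ l ih => rw [List.replicate_succ, valL_cons, ih, pow_succ']; rfl

lemma valL_duRep (j : ℕ) :
    valL α β (duRep j) = (De α β * Ue α β) ^ j := by
  induction j with
  | zero => simpa [duRep] using valL_nil α β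
  | succ j ih =>
    rw [duRep, valL_cons, valL_cons, ih, pow_succ']
    rw [← mul_assoc]; rfl

lemma valL_nwL (i j l : ℕ) :
    valL α β (nwL i j l) = (Ue α β) ^ i * ((De α β * Ue α β) ^ j * (De α β) ^ l) := by
  rw [nwL, valL_append, valL_append, valL_replicate0, valL_duRep, valL_replicate1]

/-! ### Evaluation of normal words -/

lemma symm_eq_zpow (f : P k) : (σe α β hβ).symm f = ((σe α β hβ) ^ (-1 : ℤ)) f := by
  rw [zpow_neg_one]; rfl

lemma Dpow_single (l : ℕ) (n : ℤ) (f : P k) :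
    ((Dop α β hβ) ^ l) (Finsupp.single n f) =
      Finsupp.single (n - l)
        ((∏ m ∈ Finset.range l, L α β hβ (-(m : ℤ))) * (((σe α β hβ) ^ (-(l : ℤ))) f)) := by
  induction l generalizing n f with
  | zero => simp
  | succ l ih =>
    rw [pow_succ, Module.End.mul_apply, Dop_single, ih]
    congr 1
    · push_cast; ring
    · rw [symm_eq_zpow, map_mul, ← AlgEquiv.mul_apply, ← zpow_add,
        Finset.prod_range_succ]
      have h1 : ((σe α β hβ) ^ (-(l : ℤ))) (X 1) = L α β hβ (-(l : ℤ)) := rfl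
      rw [h1]
      have h2 : (-(l : ℤ)) + (-1) = -((l + 1 : ℕ) : ℤ) := by push_cast; ring
      rw [h2]; ring

lemma DU_single (n : ℤ) (f : P k) :
    (Dop α β hβ * Uop α β hβ) (Finsupp.single n f) = Finsupp.single n (X 1 * f) := by
  rw [Module.End.mul_apply, Uop_single, Dop_single, AlgEquiv.symm_apply_apply,
    add_sub_cancel_right]

lemma DUpow_single (j : ℕ) (n : ℤ) (f : P k) :
    ((Dop α β hβ * Uop α β hβ) ^ j) (Finsupp.single n f)
      = Finsupp.single n (X 1 ^ j * f) := by
  induction j generalizing f with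
  | zero => simp
  | succ j ih =>
    rw [pow_succ, Module.End.mul_apply, DU_single, ih]
    congr 1; ring

lemma Upow_single (i : ℕ) (n : ℤ) (f : P k) :
    ((Uop α β hβ) ^ i) (Finsupp.single n f)
      = Finsupp.single (n + i) (((σe α β hβ) ^ (i : ℤ)) f) := by
  induction i with
  | zero => simp
  | succ i ih =>
    rw [pow_succ', Module.End.mul_apply, ih, Uop_single]
    congr 1
    · push_cast; ring
    · have h1 : σe α β hβ (((σe α β hβ) ^ (i : ℤ)) f)
          = ((σe α β hβ) ^ (1 : ℤ)) (((σe α β hβ) ^ (i : ℤ)) f) := by rw [zpow_one]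
      rw [h1, ← AlgEquiv.mul_apply, ← zpow_add]
      congr 1
      push_cast; ring

lemma eval_nw (i j l : ℕ) :
    ρ α β hβ (valL α β (nwL i j l)) (Finsupp.single (0 : ℤ) (1 : P k))
      = Finsupp.single ((i : ℤ) - l) (Q α β hβ (i + j) (l + j) j) := by
  rw [valL_nwL, map_mul, map_mul, map_pow, map_pow, map_pow, map_mul, ρ_Ue, ρ_De]
  rw [Module.End.mul_apply, Module.End.mul_apply, Dpow_single, DUpow_single, Upow_single]
  congr 1
  · push_cast; ring
  · rw [map_one, mul_one, map_mul, map_pow]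
    have h1 : ((σe α β hβ) ^ ((i : ℕ) : ℤ)) (X 1) = L α β hβ (i : ℤ) := rfl
    rw [h1, map_prod]
    rw [Q]
    have h2 : (l + j) - j = l := by omega
    have h3 : ((i + j : ℕ) : ℤ) - (j : ℕ) = (i : ℤ) := by push_cast; ring
    rw [h2, h3]
    congr 1
    apply Finset.prod_congr rfl
    intro m _
    rw [zpow_apply_L]
    congr 1

/-! ### Independence -/

lemma QindFin (I Λ : ℕ) :
    LinearIndependent k (fun j : Fin (min I Λ + 1) => Q α β hβ I Λ (j : ℕ)) := by
  rw [Fintype.linearIndependent_iff]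
  intro c hc j
  classical
  set c' : ℕ → k := fun m => if h : m < min I Λ + 1 then c ⟨m, h⟩ else 0 with hc'
  have hsum : ∑ m ∈ Finset.range (min I Λ + 1), c' m • Q α β hβ I Λ m = 0 := by
    rw [← Fin.sum_univ_eq_sum_range (fun m => c' m • Q α β hβ I Λ m) (min I Λ + 1)]
    rw [← hc]
    apply Finset.sum_congr rfl
    intro m _
    simp only [hc', dif_pos m.isLt, Fin.eta]
  have hres := core α β hβ Λ I c' hsum (j : ℕ) (by omega)
  simpa only [hc', dif_pos j.isLt, Fin.eta] using hres

def Fib (n : ℕ) (cz : ℤ) : Type _ :=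
  {t : ℕ × ℕ × ℕ // (t.1 + 2 * t.2.1 + t.2.2 = n) ∧ ((t.1 : ℤ) - t.2.2 = cz)}

lemma fib_indep (n : ℕ) (cz : ℤ) :
    LinearIndependent k (fun t : Fib n cz =>
      Q α β hβ (t.1.1 + t.1.2.1) (t.1.2.2 + t.1.2.1) t.1.2.1) := by
  by_cases h : Nonempty (Fib n cz)
  · obtain ⟨⟨⟨i₀, j₀, l₀⟩, h₀⟩⟩ := h
    have key : ∀ t : Fib n cz,
        t.1.1 + t.1.2.1 = i₀ + j₀ ∧ t.1.2.2 + t.1.2.1 = l₀ + j₀ := by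
      rintro ⟨⟨i, j, l⟩, h1, h2⟩
      obtain ⟨g1, g2⟩ := h₀
      simp only at h1 h2 g1 g2 ⊢
      omega
    have hemb : ∀ t : Fib n cz, t.1.2.1 < min (i₀ + j₀) (l₀ + j₀) + 1 := by
      intro t; have := key t; omega
    have hinj : Function.Injective
        (fun t : Fib n cz => (⟨t.1.2.1, hemb t⟩ : Fin (min (i₀ + j₀) (l₀ + j₀) + 1))) := by
      rintro ⟨⟨i, j, l⟩, hA1, hA2⟩ ⟨⟨i', j', l'⟩, hB1, hB2⟩ hh
      simp only [Fin.mk.injEq] at hh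
      simp only at hA1 hA2 hB1 hB2
      apply Subtype.ext
      simp only [Prod.mk.injEq]
      refine ⟨by omega, by omega, by omega⟩
    have h2 := (QindFin α β hβ (i₀ + j₀) (l₀ + j₀)).comp _ hinj
    have heq : (fun t : Fib n cz =>
        Q α β hβ (t.1.1 + t.1.2.1) (t.1.2.2 + t.1.2.1) t.1.2.1) =
        (fun j : Fin (min (i₀ + j₀) (l₀ + j₀) + 1) => Q α β hβ (i₀ + j₀) (l₀ + j₀) (j : ℕ)) ∘
          (fun t : Fib n cz => (⟨t.1.2.1, hemb t⟩ : Fin (min (i₀ + j₀) (l₀ + j₀) + 1))) := by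
      funext t
      have := key t
      simp only [Function.comp_apply]
      rw [this.1, this.2]
    rw [heq]
    exact h2
  · haveI := not_nonempty_iff.mp h
    exact linearIndependent_empty_type

def SetS (n : ℕ) : Set (ℕ × ℕ × ℕ) := {t | t.1 + 2 * t.2.1 + t.2.2 = n}

def gfun (t : ℕ × ℕ × ℕ) : DownUp k α β := valL α β (nwL t.1 t.2.1 t.2.2)

def toSig (n : ℕ) (t : SetS n) : Σ cz : ℤ, Fib n cz :=
  ⟨(t.1.1 : ℤ) - t.1.2.2, ⟨t.1, t.2, rfl⟩⟩

lemma toSig_inj (n : ℕ) : Function.Injective (toSig n) := by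
  intro a b h
  have := congrArg (fun x : Σ cz : ℤ, Fib n cz => x.2.1) h
  exact Subtype.ext this

def evL : DownUp k α β →ₗ[k] M k :=
  (LinearMap.applyₗ (Finsupp.single (0 : ℤ) (1 : P k))).comp (ρ α β hβ).toLinearMap

include hβ in
lemma indepS (n : ℕ) :
    LinearIndependent k (fun t : SetS n => gfun α β t.1) := by
  apply LinearIndependent.of_comp (evL α β hβ)
  have heq : (⇑(evL α β hβ) ∘ fun t : SetS n => gfun α β t.1) =
      (fun x : Σ cz : ℤ, Fib n cz =>
        Finsupp.single x.1
          (Q α β hβ (x.2.1.1 + x.2.1.2.1) (x.2.1.2.2 + x.2.1.2.1) x.2.1.2.1)) ∘ toSig n := by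
    funext t
    obtain ⟨⟨i, j, l⟩, ht⟩ := t
    simp only [Function.comp_apply, toSig, evL, LinearMap.coe_comp, LinearMap.applyₗ_apply_apply,
      AlgHom.toLinearMap_apply, gfun]
    exact eval_nw α β hβ i j l
  rw [heq]
  exact (Finsupp.linearIndependent_single
    (f := fun cz (t : Fib n cz) => Q α β hβ (t.1.1 + t.1.2.1) (t.1.2.2 + t.1.2.1) t.1.2.1)
    (fib_indep α β hβ n)).comp (toSig n) (toSig_inj n)

/-! ### Spanning -/

def invCount : List (Fin 2) → ℕ
  | [] => 0
  | x :: t => (if x = 1 then t.count 0 else 0) + invCount t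

lemma invCount_append (A B : List (Fin 2)) :
    invCount (A ++ B) = invCount A + invCount B + A.count 1 * B.count 0 := by
  induction A with
  | nil => simp [invCount]
  | cons x t ih =>
    rw [List.cons_append]
    by_cases hx : x = 1
    · subst hx
      simp only [invCount, ih, List.count_append, List.count_cons, if_true]
      simp
      try ring
    · simp only [invCount, ih, List.count_cons, hx, if_false]
      simp [hx]
      try ring

lemma struct (A : List (Fin 2)) :
    (∃ i j l, A = nwL i j l) ∨
      (∃ Pre Suf, A = Pre ++ ([1, 0, 0] ++ Suf) ∨ A = Pre ++ ([1, 1, 0] ++ Suf)) := by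
  induction A with
  | nil => exact Or.inl ⟨0, 0, 0, rfl⟩
  | cons x t ih =>
    rcases ih with ⟨i, j, l, rfl⟩ | ⟨Pre, Suf, h | h⟩
    · fin_cases x
      · exact Or.inl ⟨i + 1, j, l, rfl⟩
      · match i, j with
        | 0, 0 => exact Or.inl ⟨0, 0, l + 1, rfl⟩
        | 0, j + 1 =>
            exact Or.inr ⟨[], duRep j ++ List.replicate l 1, Or.inr rfl⟩
        | 1, j => exact Or.inl ⟨0, j + 1, l, rfl⟩
        | i + 2, j =>
            exact Or.inr ⟨[], List.replicate i 0 ++ (duRep j ++ List.replicate l 1), Or.inl rfl⟩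
    · exact Or.inr ⟨x :: Pre, Suf, Or.inl (by rw [h]; rfl)⟩
    · exact Or.inr ⟨x :: Pre, Suf, Or.inr (by rw [h]; rfl)⟩

lemma inv_lt (Pre Suf : List (Fin 2)) {m m' : List (Fin 2)}
    (h0 : m'.count 0 = m.count 0) (h1 : m'.count 1 = m.count 1)
    (h2 : invCount m' < invCount m) :
    invCount (Pre ++ (m' ++ Suf)) < invCount (Pre ++ (m ++ Suf)) := by
  rw [invCount_append, invCount_append, invCount_append, invCount_append,
    List.count_append, List.count_append, h0, h1]
  generalize Pre.count 1 * (m.count 0 + Suf.count 0) = X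
  generalize m.count 1 * Suf.count 0 = Y
  omega

include hβ in
lemma key1 : valL α β [(1 : Fin 2), 0, 0]
    = β⁻¹ • (valL α β [0, 0, 1] - α • valL α β [0, 1, 0]) := by
  have h := RingQuot.mkAlgHom_rel k (DownUpRel.rel1 (k := k) (a := α) (b := β))
  simp only [map_add, map_mul, map_smul] at h
  have hv : ∀ x y z : Fin 2, valL α β [x, y, z]
      = RingQuot.mkAlgHom k (DownUpRel k α β) (ι k x) *
        (RingQuot.mkAlgHom k (DownUpRel k α β) (ι k y) *
          RingQuot.mkAlgHom k (DownUpRel k α β) (ι k z)) := by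
    intro x y z
    rw [valL_cons, valL_cons, valL_cons, valL_nil, mul_one]
  have h2 : β • valL α β [(1 : Fin 2), 0, 0]
      = valL α β [0, 0, 1] - α • valL α β [0, 1, 0] := by
    rw [hv, hv, hv]
    simp only [mul_assoc] at h
    rw [h, add_sub_cancel_left]
  rw [← h2, smul_smul, inv_mul_cancel₀ hβ, one_smul]

include hβ in
lemma key2 : valL α β [(1 : Fin 2), 1, 0]
    = β⁻¹ • (valL α β [0, 1, 1] - α • valL α β [1, 0, 1]) := by
  have h := RingQuot.mkAlgHom_rel k (DownUpRel.rel2 (k := k) (a := α) (b := β))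
  simp only [map_add, map_mul, map_smul] at h
  have hv : ∀ x y z : Fin 2, valL α β [x, y, z]
      = RingQuot.mkAlgHom k (DownUpRel k α β) (ι k x) *
        (RingQuot.mkAlgHom k (DownUpRel k α β) (ι k y) *
          RingQuot.mkAlgHom k (DownUpRel k α β) (ι k z)) := by
    intro x y z
    rw [valL_cons, valL_cons, valL_cons, valL_nil, mul_one]
  have h2 : β • valL α β [(1 : Fin 2), 1, 0]
      = valL α β [0, 1, 1] - α • valL α β [1, 0, 1] := by
    rw [hv, hv, hv]
    simp only [mul_assoc] at h
    rw [h, add_sub_cancel_left]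
  rw [← h2, smul_smul, inv_mul_cancel₀ hβ, one_smul]

include hβ in
lemma spanning (Nb : ℕ) : ∀ A : List (Fin 2), invCount A < Nb →
    valL α β A ∈ Submodule.span k (gfun α β '' SetS (A.length)) := by
  induction Nb with
  | zero => intro A h; omega
  | succ Nb ih =>
    intro A hA
    rcases struct A with ⟨i, j, l, rfl⟩ | ⟨Pre, Suf, h | h⟩
    · apply Submodule.subset_span
      refine ⟨(i, j, l), ?_, rfl⟩
      show i + 2 * j + l = (nwL i j l).length
      rw [length_nwL]
    · subst h
      have e1 : valL α β (Pre ++ ([1, 0, 0] ++ Suf))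
          = β⁻¹ • (valL α β (Pre ++ ([0, 0, 1] ++ Suf))
              - α • valL α β (Pre ++ ([0, 1, 0] ++ Suf))) := by
        rw [valL_append, valL_append, valL_append, valL_append, valL_append, valL_append,
          key1 α β hβ]
        simp only [smul_mul_assoc, mul_smul_comm, sub_mul, mul_sub, smul_sub]
      have hl1 : (Pre ++ ([0, 0, 1] ++ Suf)).length = (Pre ++ ([1, 0, 0] ++ Suf)).length := by
        simp
      have hl2 : (Pre ++ ([0, 1, 0] ++ Suf)).length = (Pre ++ ([1, 0, 0] ++ Suf)).length := by
        simp
      have hi1 : invCount (Pre ++ ([0, 0, 1] ++ Suf)) < invCount (Pre ++ ([1, 0, 0] ++ Suf)) := by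
        apply inv_lt <;> simp [invCount]
      have hi2 : invCount (Pre ++ ([0, 1, 0] ++ Suf)) < invCount (Pre ++ ([1, 0, 0] ++ Suf)) := by
        apply inv_lt <;> simp [invCount]
      rw [e1]
      apply Submodule.smul_mem
      apply Submodule.sub_mem
      · have := ih (Pre ++ ([0, 0, 1] ++ Suf)) (by omega)
        rwa [hl1] at this
      · apply Submodule.smul_mem
        have := ih (Pre ++ ([0, 1, 0] ++ Suf)) (by omega)
        rwa [hl2] at this
    · subst h
      have e1 : valL α β (Pre ++ ([1, 1, 0] ++ Suf))
          = β⁻¹ • (valL α β (Pre ++ ([0, 1, 1] ++ Suf))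
              - α • valL α β (Pre ++ ([1, 0, 1] ++ Suf))) := by
        rw [valL_append, valL_append, valL_append, valL_append, valL_append, valL_append,
          key2 α β hβ]
        simp only [smul_mul_assoc, mul_smul_comm, sub_mul, mul_sub, smul_sub]
      have hl1 : (Pre ++ ([0, 1, 1] ++ Suf)).length = (Pre ++ ([1, 1, 0] ++ Suf)).length := by
        simp
      have hl2 : (Pre ++ ([1, 0, 1] ++ Suf)).length = (Pre ++ ([1, 1, 0] ++ Suf)).length := by
        simp
      have hi1 : invCount (Pre ++ ([0, 1, 1] ++ Suf)) < invCount (Pre ++ ([1, 1, 0] ++ Suf)) := by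
        apply inv_lt <;> simp [invCount]
      have hi2 : invCount (Pre ++ ([1, 0, 1] ++ Suf)) < invCount (Pre ++ ([1, 1, 0] ++ Suf)) := by
        apply inv_lt <;> simp [invCount]
      rw [e1]
      apply Submodule.smul_mem
      apply Submodule.sub_mem
      · have := ih (Pre ++ ([0, 1, 1] ++ Suf)) (by omega)
        rwa [hl1] at this
      · apply Submodule.smul_mem
        have := ih (Pre ++ ([1, 0, 1] ++ Suf)) (by omega)
        rwa [hl2] at this

end DUAux

/-- the degree-`n` component of `D(α,β)` has `k`-dimension equal to the
number of triples `(i,j,l) ∈ ℕ³` with `i + 2j + l = n`; i.e. the Hilbert series of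
`D(α,β)` is `1/((1−t)²(1−t²))`. -/
theorem downUp_hilbertSeries (k : Type*) [Field k] [IsAlgClosed k] [CharZero k]
    (α β : k) (hβ : β ≠ 0) (n : ℕ) :
    Module.finrank k (DownUp.degComp k α β n) =
      Set.ncard {t : ℕ × ℕ × ℕ | t.1 + 2 * t.2.1 + t.2.2 = n} := by
  classical
  have hSfin : (DUAux.SetS n).Finite := by
    apply Set.Finite.subset (Set.finite_Icc ((0, 0, 0) : ℕ × ℕ × ℕ) (n, n, n))
    rintro ⟨a, b, c⟩ h
    simp only [DUAux.SetS, Set.mem_setOf_eq] at h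
    simp only [Set.mem_Icc, Prod.le_def]
    omega
  have hspan : DownUp.degComp k α β n
      = Submodule.span k (DUAux.gfun α β '' DUAux.SetS n) := by
    apply le_antisymm
    · rw [DownUp.degComp]
      apply Submodule.span_le.2
      rintro z ⟨w, hlen, rfl⟩
      have hval : DownUp.wordVal k α β w = DUAux.valL α β w.toList := by
        rw [DUAux.valL, FreeMonoid.ofList_toList]
      rw [hval]
      have hl : (FreeMonoid.toList w).length = n := hlen
      rw [← hl]
      exact DUAux.spanning α β hβ (DUAux.invCount w.toList + 1) w.toList (by omega)
    · apply Submodule.span_le.2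
      rintro z ⟨⟨i, j, l⟩, ht, rfl⟩
      apply Submodule.subset_span
      refine ⟨FreeMonoid.ofList (DUAux.nwL i j l), ?_, rfl⟩
      show (DUAux.nwL i j l).length = n
      rw [DUAux.length_nwL]
      exact ht
  have hind : LinearIndependent k (fun t : DUAux.SetS n => DUAux.gfun α β t.1) :=
    DUAux.indepS α β hβ n
  have himg : LinearIndependent k
      ((↑) : (DUAux.gfun α β '' DUAux.SetS n) → DownUp k α β) :=
    LinearIndepOn.id_image (s := DUAux.SetS n) (v := DUAux.gfun α β) hind
  haveI : Fintype ↥(DUAux.gfun α β '' DUAux.SetS n) := (hSfin.image _).fintype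
  rw [hspan, finrank_span_set_eq_card himg]
  have hinj : Set.InjOn (DUAux.gfun α β) (DUAux.SetS n) := by
    intro a ha b hb hab
    have h2 : (⟨a, ha⟩ : DUAux.SetS n) = ⟨b, hb⟩ := hind.injective hab
    exact congrArg Subtype.val h2
  rw [← Set.ncard_eq_toFinset_card', Set.ncard_image_of_injOn hinj]
  rfl

end
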